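/- Let f : ℝ → ℝ be continuous with f(x+1) - f(x) = l for all x, l a nonzero integer, α irrational; define T(x,y) = (x+α, f(x)+y) on 𝕋² and τ(x) = x+α on 𝕋¹. Then the projection π : 𝕋² → 𝕋¹, π(x,y) = x, is a factor map onto the maximal equicontinuous factor of (𝕋², T). -/

import Mathlib

abbrev Torus1 := AddCircle (1:ℝ)
abbrev Torus2 := Torus1 × Torus1

open Finset Filter Topology

namespace Stmt10H

lemma norm_coe_le (w : ℝ) : ‖(w : Torus1)‖ ≤ |w| := by
  rw [AddCircle.norm_eq, inv_one, one_mul, mul_one]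
  simpa using round_le w 0

lemma coe_int_eq_zero (m : ℤ) : (((m:ℝ)) : Torus1) = 0 := by
  rw [AddCircle.coe_eq_zero_iff]; exact ⟨m, by simp⟩

lemma norm_coe_lt {w d : ℝ} (m : ℤ) (h : |w - m| < d) : ‖(w : Torus1)‖ < d := by
  have h0 : ((w:ℝ) : Torus1) = ((w - m : ℝ) : Torus1) := by
    rw [AddCircle.coe_sub (p:=1), coe_int_eq_zero, sub_zero]
  rw [h0]; exact lt_of_le_of_lt (norm_coe_le _) h

lemma coe_neg' (w : ℝ) : ((-w : ℝ) : Torus1) = -((w:ℝ) : Torus1) := by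
  have : (-w : ℝ) = 0 - w := by ring
  rw [this, AddCircle.coe_sub (p:=1)]
  simp

lemma backward {Y : Type} [MetricSpace Y] [CompactSpace Y] {S : Y → Y}
    (hsurj : Function.Surjective S) (hequi : Equicontinuous fun n : ℕ => S^[n])
    {ε : ℝ} (hε : 0 < ε) :
    ∃ δ > 0, ∀ a b (n : ℕ), dist (S^[n] a) (S^[n] b) < δ → dist a b < ε := by
  obtain ⟨C, hC⟩ : ∃ C, ∀ x y : Y, dist x y ≤ C := by
    rcases Metric.isBounded_iff.1 (isCompact_univ (X := Y)).isBounded with ⟨C, hC⟩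
    exact ⟨C, fun x y => hC (Set.mem_univ x) (Set.mem_univ y)⟩
  have hUE := Metric.uniformEquicontinuous_iff.1
    (CompactSpace.uniformEquicontinuous_of_equicontinuous hequi)
  set D : Y → Y → ℝ := fun a b => ⨆ n : ℕ, dist (S^[n] a) (S^[n] b) with hD
  have hbdd : ∀ a b : Y, BddAbove (Set.range fun n : ℕ => dist (S^[n] a) (S^[n] b)) :=
    fun a b => ⟨C, by rintro _ ⟨n, rfl⟩; exact hC _ _⟩
  have hle : ∀ (a b : Y) (n : ℕ), dist (S^[n] a) (S^[n] b) ≤ D a b :=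
    fun a b n => le_ciSup (hbdd a b) n
  have hsup : ∀ {a b : Y} {c : ℝ}, (∀ n : ℕ, dist (S^[n] a) (S^[n] b) ≤ c) → D a b ≤ c :=
    fun h => ciSup_le h
  have hdist : ∀ a b : Y, dist a b ≤ D a b := fun a b => by
    simpa using hle a b 0
  have hDsymm : ∀ a b, D a b = D b a := fun a b => by
    simp only [hD]
    congr 1; funext n; exact dist_comm _ _
  have htri : ∀ a b c, D a c ≤ D a b + D b c := fun a b c =>
    hsup fun n => (dist_triangle _ (S^[n] b) _).trans (add_le_add (hle a b n) (hle b c n))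
  have hUED : ∀ e : ℝ, 0 < e → ∃ d > 0, ∀ a b, dist a b < d → D a b ≤ e := by
    intro e he
    obtain ⟨d, hd, h⟩ := hUE e he
    exact ⟨d, hd, fun a b hab => hsup fun n => (h a b hab n).le⟩
  have hDS : ∀ a b, D (S a) (S b) ≤ D a b := fun a b =>
    hsup fun n => by
      rw [← Function.iterate_succ_apply, ← Function.iterate_succ_apply]
      exact hle a b (n+1)
  set g := Function.surjInv hsurj with hgdef
  have hg : ∀ y, S (g y) = y := fun y => Function.surjInv_eq hsurj y
  have hexp : ∀ a b, D a b ≤ D (g a) (g b) := fun a b => by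
    have := hDS (g a) (g b); rwa [hg, hg] at this
  have hexp_iter : ∀ (n : ℕ) (a b), D a b ≤ D (g^[n] a) (g^[n] b) := by
    intro n
    induction n with
    | zero => simp
    | succ n ih =>
        intro a b
        calc D a b ≤ D (g^[n] a) (g^[n] b) := ih a b
        _ ≤ D (g (g^[n] a)) (g (g^[n] b)) := hexp _ _
        _ = D (g^[n+1] a) (g^[n+1] b) := by
            rw [Function.iterate_succ_apply', Function.iterate_succ_apply']
  have hret : ∀ (a b : Y) (e : ℝ), 0 < e →
      ∃ k : ℕ, 1 ≤ k ∧ D (g^[k] a) a ≤ e ∧ D (g^[k] b) b ≤ e := by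
    intro a b e he
    obtain ⟨d, hd, hUEd⟩ := hUED e he
    obtain ⟨c, φ, hφ, hconv⟩ := CompactSpace.tendsto_subseq (fun n : ℕ => (g^[n] a, g^[n] b))
    obtain ⟨N, hN⟩ := (Metric.tendsto_atTop.1 hconv) (d/2) (by linarith)
    have h1 := hN N (le_refl N)
    have h2 := hN (N+1) (by omega)
    simp only [Function.comp_apply] at h1 h2
    have hd2 : dist ((fun n : ℕ => (g^[n] a, g^[n] b)) (φ (N+1)))
        ((fun n : ℕ => (g^[n] a, g^[n] b)) (φ N)) < d := by
      calc dist _ _ ≤ dist ((fun n : ℕ => (g^[n] a, g^[n] b)) (φ (N+1))) c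
            + dist c ((fun n : ℕ => (g^[n] a, g^[n] b)) (φ N)) := dist_triangle _ _ _
      _ < d := by rw [dist_comm c]; linarith
    rw [Prod.dist_eq] at hd2
    have hda : dist (g^[φ (N+1)] a) (g^[φ N] a) < d := (le_max_left _ _).trans_lt hd2
    have hdb : dist (g^[φ (N+1)] b) (g^[φ N] b) < d := (le_max_right _ _).trans_lt hd2
    set k := φ (N+1) - φ N with hk
    have hmono := hφ (show N < N + 1 by omega)
    have hk1 : 1 ≤ k := by omega
    have hkad : φ N + k = φ (N+1) := by omega
    refine ⟨k, hk1, ?_, ?_⟩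
    · calc D (g^[k] a) a ≤ D (g^[φ N] (g^[k] a)) (g^[φ N] a) := hexp_iter (φ N) _ _
      _ = D (g^[φ (N+1)] a) (g^[φ N] a) := by rw [← Function.iterate_add_apply, hkad]
      _ ≤ e := hUEd _ _ hda
    · calc D (g^[k] b) b ≤ D (g^[φ N] (g^[k] b)) (g^[φ N] b) := hexp_iter (φ N) _ _
      _ = D (g^[φ (N+1)] b) (g^[φ N] b) := by rw [← Function.iterate_add_apply, hkad]
      _ ≤ e := hUEd _ _ hdb
  have hgiso : ∀ a b, D (g a) (g b) = D a b := by
    intro a b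
    refine le_antisymm ?_ (hexp a b)
    refine le_of_forall_pos_le_add ?_
    intro e he
    obtain ⟨k, hk1, ha, hb⟩ := hret a b (e/2) (by linarith)
    have h1 : D (g a) (g b) ≤ D (g^[k] a) (g^[k] b) := by
      have h := hexp_iter (k-1) (g a) (g b)
      rwa [← Function.iterate_succ_apply, ← Function.iterate_succ_apply,
        Nat.succ_eq_add_one, Nat.sub_add_cancel hk1] at h
    have h2 : D (g^[k] a) (g^[k] b) ≤ D (g^[k] a) a + D a (g^[k] b) := htri _ _ _
    have h3 : D a (g^[k] b) ≤ D a b + D b (g^[k] b) := htri _ _ _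
    have h4 : D b (g^[k] b) = D (g^[k] b) b := hDsymm _ _
    linarith
  have hgcont : Continuous g := by
    rw [Metric.continuous_iff]
    intro x e he
    obtain ⟨d, hd, hUEd⟩ := hUED (e/2) (by linarith)
    refine ⟨d, hd, fun y hy => ?_⟩
    have : dist (g y) (g x) ≤ e/2 := (hdist _ _).trans (by rw [hgiso]; exact hUEd _ _ hy)
    linarith
  have hgsurj : Function.Surjective g := by
    intro a
    have hcl : IsClosed (Set.range g) := (isCompact_range hgcont).isClosed
    have hmem : a ∈ closure (Set.range g) := by
      rw [Metric.mem_closure_iff]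
      intro e he
      obtain ⟨k, hk1, ha, -⟩ := hret a a (e/2) (by linarith)
      refine ⟨g^[k] a, ?_, ?_⟩
      · rw [← Nat.sub_add_cancel hk1, Function.iterate_succ_apply']
        exact ⟨_, rfl⟩
      · have h5 : dist (g^[k] a) a ≤ e/2 := (hdist _ _).trans ha
        rw [dist_comm]; linarith
    rwa [hcl.closure_eq] at hmem
  have hgS : ∀ a, g (S a) = a := by
    intro a; obtain ⟨b, rfl⟩ := hgsurj a; rw [hg]
  have hDSeq : ∀ a b, D (S a) (S b) = D a b := by
    intro a b
    conv_rhs => rw [← hgS a, ← hgS b]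
    exact (hgiso (S a) (S b)).symm
  have hDSn : ∀ (n : ℕ) (a b), D (S^[n] a) (S^[n] b) = D a b := by
    intro n
    induction n with
    | zero => simp
    | succ n ih =>
        intro a b
        rw [Function.iterate_succ_apply', Function.iterate_succ_apply', hDSeq, ih]
  obtain ⟨d, hd, hUEd⟩ := hUED (ε/2) (by linarith)
  refine ⟨d, hd, fun a b n h => ?_⟩
  have h6 : D a b ≤ ε/2 := by rw [← hDSn n]; exact hUEd _ _ h
  have := (hdist a b).trans h6
  linarith

end Stmt10H

namespace Stmt10H

lemma dirichlet' (α : ℝ) {δ : ℝ} (hδ : 0 < δ) :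
    ∃ q : ℕ, 1 ≤ q ∧ ∃ m : ℤ, |(q:ℝ) * α - m| < δ := by
  set N := ⌈1/δ⌉₊ + 1 with hN
  obtain ⟨k, hk0, -, hk⟩ := Real.exists_nat_abs_mul_sub_round_le α (n := N) (by omega)
  refine ⟨k, hk0, round ((k:ℝ)*α), lt_of_le_of_lt hk ?_⟩
  have h1 : (1:ℝ)/δ ≤ N := (Nat.le_ceil _).trans (by exact_mod_cast Nat.le_succ _)
  rw [div_lt_iff₀ (by positivity)]
  have h2 : (1:ℝ) = δ * (1/δ) := by field_simp
  nlinarith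

lemma hit {r b : ℝ} (hr : 0 < r) (hb : 0 ≤ b) : ∃ j : ℕ, |(j:ℝ) * r - b| < r := by
  refine ⟨⌊b/r⌋₊, ?_⟩
  have h1 : (⌊b/r⌋₊ : ℝ) * r ≤ b := by
    rw [← le_div_iff₀ hr]; exact Nat.floor_le (div_nonneg hb hr.le)
  have h2 : b < ((⌊b/r⌋₊ : ℝ) + 1) * r := by
    rw [← div_lt_iff₀ hr]; exact Nat.lt_floor_add_one _
  rw [abs_lt]; constructor <;> nlinarith

lemma dense2 {α : ℝ} (hα : Irrational α) (β : ℝ) {δ : ℝ} (hδ : 0 < δ) :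
    ∃ (n : ℕ) (m : ℤ), |(n:ℝ) * α - β - m| < δ := by
  obtain ⟨k, hk1, m₀, hm₀⟩ := dirichlet' α hδ
  set r := (k:ℝ) * α - m₀ with hr
  have hrne : r ≠ 0 := by
    intro h
    apply hα
    refine ⟨(m₀ : ℚ) / (k : ℚ), ?_⟩
    have hk0 : (k:ℝ) ≠ 0 := by positivity
    push_cast
    rw [div_eq_iff hk0]
    linarith
  rcases hrne.lt_or_gt with hneg | hpos
  · -- r < 0
    obtain ⟨j, hj⟩ := hit (neg_pos.2 hneg) (Int.fract_nonneg (-β))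
    refine ⟨j * k, j * m₀ + ⌊-β⌋, ?_⟩
    have hfr : Int.fract (-β) = -β - ⌊-β⌋ := Int.self_sub_floor (-β) ▸ rfl
    have : ((j * k : ℕ):ℝ) * α - β - ((j * m₀ + ⌊-β⌋ : ℤ):ℝ)
        = -((j:ℝ) * (-r) - Int.fract (-β)) := by
      rw [hfr, hr]; push_cast; ring
    rw [this, abs_neg]
    calc |(j:ℝ) * (-r) - Int.fract (-β)| < -r := hj
    _ ≤ |r| := by rw [abs_of_neg hneg]
    _ < δ := hm₀
  · -- r > 0
    obtain ⟨j, hj⟩ := hit hpos (Int.fract_nonneg β)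
    refine ⟨j * k, j * m₀ - ⌊β⌋, ?_⟩
    have hfr : Int.fract β = β - ⌊β⌋ := rfl
    have : ((j * k : ℕ):ℝ) * α - β - ((j * m₀ - ⌊β⌋ : ℤ):ℝ)
        = (j:ℝ) * r - Int.fract β := by
      rw [hfr, hr]; push_cast; ring
    rw [this]
    calc |(j:ℝ) * r - Int.fract β| < r := hj
    _ ≤ |r| := le_abs_self r
    _ < δ := hm₀

section Fsec

variable {f : ℝ → ℝ} {l : ℤ}

lemma f_int (hfl : ∀ x : ℝ, f (x + 1) - f x = l) :
    ∀ (m : ℤ) (x : ℝ), f (x + m) = f x + m * l := by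
  have hstep : ∀ x : ℝ, f (x + 1) = f x + l := fun x => by linarith [hfl x]
  intro m
  induction m using Int.induction_on with
  | zero => simp
  | succ k ih =>
      intro x
      have e1 : (x + ((k:ℤ)+1 : ℤ) : ℝ) = (x + (k:ℤ)) + 1 := by push_cast; ring
      rw [e1, hstep, ih]
      push_cast; ring
  | pred k ih =>
      intro x
      have e1 : (x + (-(k:ℤ)-1 : ℤ) : ℝ) + 1 = x + (-(k:ℤ) : ℤ) := by push_cast; ring
      have h2 := hstep (x + (-(k:ℤ)-1 : ℤ))
      rw [e1, ih] at h2
      push_cast at h2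
      push_cast
      linarith

def Fsum (f : ℝ → ℝ) (α : ℝ) (q : ℕ) (x : ℝ) : ℝ := ∑ i ∈ Finset.range q, f (x + i * α)

lemma Fsum_cont (hf : Continuous f) (α : ℝ) (q : ℕ) : Continuous (Fsum f α q) := by
  unfold Fsum
  exact continuous_finset_sum _ fun i _ => hf.comp (continuous_id.add continuous_const)

lemma Fsum_int (hfl : ∀ x : ℝ, f (x + 1) - f x = l) (α : ℝ) (q : ℕ) (m : ℤ) (x : ℝ) :
    Fsum f α q (x + m) = Fsum f α q x + m * ((q:ℝ) * l) := by
  unfold Fsum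
  have h1 : ∀ i : ℕ, f (x + m + i * α) = f (x + i * α) + m * l := by
    intro i
    have e : (x + (m:ℝ) + i * α) = (x + i * α) + m := by ring
    rw [e, f_int hfl]
  simp_rw [h1]
  rw [Finset.sum_add_distrib, Finset.sum_const, Finset.card_range]
  push_cast; ring

lemma Fsum_shift (α : ℝ) (q n : ℕ) (x : ℝ) :
    Fsum f α n (x + q * α) - Fsum f α n x = Fsum f α q (x + n * α) - Fsum f α q x := by
  unfold Fsum
  have h1 : ∑ i ∈ Finset.range n, f (x + (q:ℝ) * α + i * α)
      = ∑ i ∈ Finset.range n, f (x + ((q + i : ℕ):ℝ) * α) := by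
    apply Finset.sum_congr rfl
    intro i _
    congr 1
    push_cast; ring
  have h2 : ∑ i ∈ Finset.range q, f (x + (n:ℝ) * α + i * α)
      = ∑ i ∈ Finset.range q, f (x + ((n + i : ℕ):ℝ) * α) := by
    apply Finset.sum_congr rfl
    intro i _
    congr 1
    push_cast; ring
  have h3 := Finset.sum_range_add (fun i : ℕ => f (x + (i:ℝ) * α)) q n
  have h4 := Finset.sum_range_add (fun i : ℕ => f (x + (i:ℝ) * α)) n q
  have h5 : q + n = n + q := by omega
  rw [h5] at h3
  rw [h1, h2]
  linarith

lemma exists_hit (hf : Continuous f) (hfl : ∀ x : ℝ, f (x + 1) - f x = l) (hl : l ≠ 0)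
    (α : ℝ) {q : ℕ} (hq : 1 ≤ q) (x t : ℝ) :
    ∃ z ∈ Set.Icc x (x+1), ∃ m : ℤ, Fsum f α q z = Fsum f α q x - t + m := by
  have hstep : Fsum f α q (x+1) = Fsum f α q x + (q:ℝ) * l := by
    have h := Fsum_int hfl α q 1 x
    push_cast at h
    linarith
  have hq1 : (1:ℝ) ≤ (q:ℝ) := by exact_mod_cast hq
  rcases hl.lt_or_gt with hneg | hpos
  · have hll' : l ≤ -1 := by omega
    have hll : (l:ℝ) ≤ -1 := by exact_mod_cast hll'
    have hql : (q:ℝ) * l ≤ -1 := by nlinarith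
    have himage := intermediate_value_Icc' (by linarith : x ≤ x+1)
      ((Fsum_cont hf α q).continuousOn)
    have hv : Fsum f α q x - t + (⌊t⌋:ℝ) ∈ Set.Icc (Fsum f α q (x+1)) (Fsum f α q x) := by
      constructor
      · rw [hstep]
        have := Int.sub_one_lt_floor t
        linarith
      · have := Int.floor_le t
        linarith
    obtain ⟨z, hz, hfz⟩ := himage hv
    exact ⟨z, hz, ⌊t⌋, hfz⟩
  · have hll' : 1 ≤ l := by omega
    have hll : (1:ℝ) ≤ (l:ℝ) := by exact_mod_cast hll'
    have hql : (1:ℝ) ≤ (q:ℝ) * l := by nlinarith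
    have himage := intermediate_value_Icc (by linarith : x ≤ x+1)
      ((Fsum_cont hf α q).continuousOn)
    have hv : Fsum f α q x - t + (⌈t⌉:ℝ) ∈ Set.Icc (Fsum f α q x) (Fsum f α q (x+1)) := by
      constructor
      · have := Int.le_ceil t
        linarith
      · rw [hstep]
        have := Int.ceil_lt_add_one t
        linarith
    obtain ⟨z, hz, hfz⟩ := himage hv
    exact ⟨z, hz, ⌈t⌉, hfz⟩

lemma dense_hit (hf : Continuous f) (hfl : ∀ x : ℝ, f (x + 1) - f x = l) (hl : l ≠ 0)
    {α : ℝ} (hα : Irrational α) {q : ℕ} (hq : 1 ≤ q) (x t : ℝ) {η : ℝ} (hη : 0 < η) :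
    ∃ n : ℕ, ‖((Fsum f α q (x + n * α) - Fsum f α q x + t : ℝ) : Torus1)‖ < η := by
  obtain ⟨z, hz, m, hm⟩ := exists_hit hf hfl hl α hq x t
  obtain ⟨ρ, hρ, hcont⟩ := Metric.continuous_iff.1 (Fsum_cont hf α q) z η hη
  obtain ⟨n, m', hnm⟩ := dense2 hα (z - x) hρ
  refine ⟨n, ?_⟩
  set z' := x + (n:ℝ) * α - m' with hz'
  have hdz : dist z' z < ρ := by
    rw [Real.dist_eq]
    have e : z' - z = (n:ℝ) * α - (z - x) - m' := by rw [hz']; ring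
    rw [e]; exact hnm
  have hFz' : |Fsum f α q z' - Fsum f α q z| < η := by
    have := hcont z' hdz
    rwa [Real.dist_eq] at this
  have hkey : Fsum f α q (x + (n:ℝ)*α) = Fsum f α q z' + (m':ℝ) * ((q:ℝ) * l) := by
    have e : (x + (n:ℝ)*α : ℝ) = z' + (m':ℝ) := by rw [hz']; ring
    rw [e, Fsum_int hfl]
  have hexpr : (Fsum f α q (x + (n:ℝ)*α) - Fsum f α q x + t : ℝ)
      = (Fsum f α q z' - Fsum f α q z) + ((m + m' * (q * l) : ℤ) : ℝ) := by
    rw [hkey, hm]; push_cast; ring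
  rw [hexpr]
  have h0 : (((Fsum f α q z' - Fsum f α q z) + ((m + m' * (q * l) : ℤ) : ℝ) : ℝ) : Torus1)
      = ((Fsum f α q z' - Fsum f α q z : ℝ) : Torus1) := by
    rw [AddCircle.coe_add (p:=1), coe_int_eq_zero, add_zero]
  rw [h0]
  exact lt_of_le_of_lt (norm_coe_le _) hFz'

end Fsec

end Stmt10H

open Stmt10H

theorem stmt10 (l : ℤ) (hl : l ≠ 0) (α : ℝ) (hα : Irrational α)
    (f : ℝ → ℝ) (hf : Continuous f) (hfl : ∀ x : ℝ, f (x + 1) - f x = l)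
    (F : Torus1 → Torus1) (hF : ∀ x : ℝ, F (x : Torus1) = ((f x : ℝ) : Torus1))
    (T : Torus2 → Torus2)
    (hT : ∀ p : Torus2, T p = (p.1 + (α : Torus1), F p.1 + p.2))
    (τ : Torus1 → Torus1) (hτ : ∀ x : Torus1, τ x = x + (α : Torus1))
    (π : Torus2 → Torus1) (hπ : ∀ p : Torus2, π p = p.1) :
    -- `π` is a factor map from `(𝕋², T)` onto the equicontinuous system `(𝕋¹, τ)` ...
    (Continuous π ∧ Function.Surjective π ∧ π ∘ T = τ ∘ π ∧
      Equicontinuous fun n : ℕ => τ^[n]) ∧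
    -- ... and it is the *maximal* equicontinuous factor: every factor map from
    -- `(𝕋², T)` onto an equicontinuous system factors through `π`.
    (∀ (Y : Type) (_ : MetricSpace Y) (_ : CompactSpace Y) (S : Y → Y) (ψ : Torus2 → Y),
      Continuous S → Continuous ψ → Function.Surjective ψ → ψ ∘ T = S ∘ ψ →
      (Equicontinuous fun n : ℕ => S^[n]) →
      ∃ θ : Torus1 → Y, Continuous θ ∧ ψ = θ ∘ π) := by
  constructor
  · refine ⟨?_, ?_, ?_, ?_⟩
    · have hπ' : π = Prod.fst := funext hπ
      rw [hπ']; exact continuous_fst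
    · intro u; exact ⟨(u, 0), hπ (u, 0)⟩
    · funext p
      simp only [Function.comp_apply, hπ, hT, hτ]
    · have hτn : ∀ (n : ℕ) (a b : Torus1), dist (τ^[n] a) (τ^[n] b) = dist a b := by
        intro n
        induction n with
        | zero => simp
        | succ n ih =>
            intro a b
            rw [Function.iterate_succ_apply', Function.iterate_succ_apply', hτ, hτ,
              dist_add_right, ih]
      intro x₀
      rw [Metric.equicontinuousAt_iff]
      intro ε hε
      exact ⟨ε, hε, fun x hx n => by rw [hτn]; rwa [dist_comm]⟩
  · intro Y iY cY S ψ hScont hψc hψs hcomm hSe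
    have hTsurj : Function.Surjective T := by
      rintro ⟨u, v⟩
      refine ⟨(u - (α:Torus1), v - F (u - (α:Torus1))), ?_⟩
      rw [hT]
      simp
    have hSsurj : Function.Surjective S := by
      intro y₀
      obtain ⟨p, rfl⟩ := hψs y₀
      obtain ⟨p', rfl⟩ := hTsurj p
      exact ⟨ψ p', (congrFun hcomm p').symm⟩
    have hiter : ∀ (n : ℕ) (p : Torus2), ψ (T^[n] p) = S^[n] (ψ p) := by
      intro n
      induction n with
      | zero => intro p; simp
      | succ n ih =>
          intro p
          rw [Function.iterate_succ_apply', Function.iterate_succ_apply', ← ih p]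
          exact congrFun hcomm (T^[n] p)
    have hTn : ∀ (n : ℕ) (a b : ℝ), T^[n] (((a:ℝ):Torus1), ((b:ℝ):Torus1))
        = (((a + n*α : ℝ):Torus1), ((Fsum f α n a + b : ℝ):Torus1)) := by
      intro n
      induction n with
      | zero =>
          intro a b
          simp [Fsum]
      | succ n ih =>
          intro a b
          rw [Function.iterate_succ_apply', ih, hT]
          dsimp only
          rw [hF]
          refine Prod.ext ?_ ?_
          · show ((a + n*α : ℝ):Torus1) + ((α:ℝ):Torus1) = ((a + (n+1:ℕ)*α : ℝ):Torus1)
            rw [← AddCircle.coe_add (p:=1)]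
            congr 1
            push_cast; ring
          · show ((f (a + n*α) : ℝ):Torus1) + ((Fsum f α n a + b : ℝ):Torus1)
                = ((Fsum f α (n+1:ℕ) a + b : ℝ):Torus1)
            rw [← AddCircle.coe_add (p:=1)]
            congr 1
            simp only [Fsum, Finset.sum_range_succ]
            ring
    have key : ∀ (x y t : ℝ),
        ψ (((x:ℝ):Torus1), ((y+t:ℝ):Torus1)) = ψ (((x:ℝ):Torus1), ((y:ℝ):Torus1)) := by
      intro x y t
      have hdist0 : ∀ ε, 0 < ε →
          dist (ψ (((x:ℝ):Torus1), ((y+t:ℝ):Torus1))) (ψ (((x:ℝ):Torus1), ((y:ℝ):Torus1))) < ε := by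
        intro ε hε
        obtain ⟨δ₁, hδ₁, h₁⟩ := backward hSsurj hSe hε
        have hψu := Metric.uniformContinuous_iff.1 (CompactSpace.uniformContinuous_of_continuous hψc)
        have hSUE := Metric.uniformEquicontinuous_iff.1
          (CompactSpace.uniformEquicontinuous_of_equicontinuous hSe)
        obtain ⟨δ₁', hδ₁', hS1⟩ := hSUE (δ₁/2) (by linarith)
        obtain ⟨δ₂, hδ₂, hψ2⟩ := hψu δ₁' hδ₁'
        have h₂ : ∀ p q : Torus2, dist p q < δ₂ → ∀ n : ℕ,
            dist (ψ (T^[n] p)) (ψ (T^[n] q)) < δ₁/2 := by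
          intro p q hpq n
          rw [hiter, hiter]
          exact hS1 _ _ (hψ2 hpq) n
        obtain ⟨q₀, hq₀, m₀, hm₀⟩ := dirichlet' α hδ₂
        set s := (q₀:ℝ) * α with hs
        obtain ⟨n, hn⟩ := dense_hit hf hfl hl hα hq₀ x t hδ₂
        have hnorm_s : ∀ a : ℝ, dist ((a:ℝ):Torus1) ((a + s :ℝ):Torus1) < δ₂ := by
          intro a
          rw [dist_eq_norm, ← AddCircle.coe_sub (p:=1)]
          rw [show (a - (a + s) : ℝ) = -s by ring]
          refine norm_coe_lt (-m₀) ?_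
          rw [show (-s - ((-m₀ : ℤ):ℝ) : ℝ) = -(s - m₀) by push_cast; ring, abs_neg]
          exact hm₀
        set p₁ : Torus2 := (((x:ℝ):Torus1), ((y:ℝ):Torus1)) with hp₁
        set q₁ : Torus2 := (((x:ℝ):Torus1), ((y+t:ℝ):Torus1)) with hq₁
        set q₂ : Torus2 := (((x+s:ℝ):Torus1), ((y+t:ℝ):Torus1)) with hq₂
        have hq12 : dist q₁ q₂ < δ₂ := by
          rw [hq₁, hq₂, Prod.dist_eq]
          exact max_lt (hnorm_s x) (by simpa using hδ₂)
        have hA1 : ∀ m : ℕ, dist (ψ (T^[m] q₁)) (ψ (T^[m] q₂)) < δ₁/2 := h₂ _ _ hq12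
        have hd : dist (T^[n] p₁) (T^[n] q₂) < δ₂ := by
          rw [hp₁, hq₂, hTn n x y, hTn n (x+s) (y+t), Prod.dist_eq]
          refine max_lt ?_ ?_
          · rw [show (x + s + (n:ℝ)*α : ℝ) = (x + (n:ℝ)*α) + s by ring]
            exact hnorm_s _
          · rw [dist_eq_norm, ← AddCircle.coe_sub (p:=1)]
            have hshift := Fsum_shift (f := f) α q₀ n x
            have hw : (Fsum f α n x + y - (Fsum f α n (x+s) + (y+t)) : ℝ)
                = -(Fsum f α q₀ (x + (n:ℝ)*α) - Fsum f α q₀ x + t) := by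
              rw [hs]
              linarith [hshift]
            rw [hw, coe_neg', norm_neg]
            exact hn
        have hA2 : dist (ψ (T^[n] p₁)) (ψ (T^[n] q₂)) < δ₁/2 := by
          have h0 := h₂ _ _ hd 0
          simpa using h0
        have hfinal : dist (S^[n] (ψ p₁)) (S^[n] (ψ q₁)) < δ₁ := by
          rw [← hiter, ← hiter]
          calc dist (ψ (T^[n] p₁)) (ψ (T^[n] q₁))
              ≤ dist (ψ (T^[n] p₁)) (ψ (T^[n] q₂)) + dist (ψ (T^[n] q₂)) (ψ (T^[n] q₁)) :=
                dist_triangle _ _ _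
          _ < δ₁/2 + δ₁/2 := add_lt_add hA2 (by rw [dist_comm]; exact hA1 n)
          _ = δ₁ := by ring
        have hres := h₁ (ψ p₁) (ψ q₁) n hfinal
        rw [dist_comm] at hres
        exact hres
      have h0 : dist (ψ (((x:ℝ):Torus1), ((y+t:ℝ):Torus1)))
          (ψ (((x:ℝ):Torus1), ((y:ℝ):Torus1))) ≤ 0 := by
        by_contra hcon
        push_neg at hcon
        exact absurd (hdist0 _ hcon) (lt_irrefl _)
      exact dist_le_zero.1 h0
    refine ⟨fun u => ψ (u, 0), hψc.comp (continuous_id.prodMk continuous_const), ?_⟩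
    funext p
    obtain ⟨x, hx⟩ := (QuotientAddGroup.mk_surjective : Function.Surjective ((↑·) : ℝ → Torus1)) p.1
    obtain ⟨t, ht⟩ := (QuotientAddGroup.mk_surjective : Function.Surjective ((↑·) : ℝ → Torus1)) p.2
    have hp : p = (((x:ℝ):Torus1), ((t:ℝ):Torus1)) := by
      rw [hx, ht]
    show ψ p = ψ (π p, 0)
    rw [hπ, hp]
    have h1 := key x 0 t
    rw [zero_add] at h1
    simpa using h1
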